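/- arXiv:1212.1424 — 3 statements merged into one kernel-verified Lean document; each statement's English description precedes it below -/
import Mathlib

section
/- Let H be a hereditary abelian k-category and A a full subcategory of H closed under direct summands. Then A is abelian (as an exact abelian subcategory) and closed under extensions if and only if A is thick, i.e., whenever two terms of a short exact sequence in H lie in A, so does the third. -/
open CategoryTheory CategoryTheory.Limits

universe v u

variable {H : Type u} [Category.{v} H] [Abelian H]

/-- `(f, g)` form a short exact sequence `0 → A → B → C → 0`. -/
def IsShortExact {A B C : H} (f : A ⟶ B) (g : B ⟶ C) : Prop :=
  ∃ w : f ≫ g = 0, (ShortComplex.mk f g w).ShortExact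

/-- `H` is hereditary: `Ext¹(B,K) → Ext¹(E,K)` is surjective for every
monomorphism `E ⟶ B`, expressed element-wise: every extension of `E` by `K`
is the restriction (pullback) of an extension of `B` by `K`. -/
def Hereditary (H : Type u) [Category.{v} H] [Abelian H] : Prop :=
  ∀ (K X E B : H) (f : K ⟶ X) (g : X ⟶ E) (i : E ⟶ B), Mono i →
    IsShortExact f g →
    ∃ (X' : H) (f' : K ⟶ X') (g' : X' ⟶ B) (h : X ⟶ X'),
      IsShortExact f' g' ∧ f ≫ h = f' ∧ h ≫ g' = g ≫ i

/-- `A` is closed under isomorphisms. -/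
def IsoClosed (A : H → Prop) : Prop := ∀ X Y : H, (X ≅ Y) → A X → A Y

/-- `A` is closed under direct summands (retracts). -/
def SummandClosed (A : H → Prop) : Prop :=
  ∀ (X Y : H) (s : X ⟶ Y) (r : Y ⟶ X), s ≫ r = 𝟙 X → A Y → A X

/-- `A` is closed under extensions. -/
def ExtClosed (A : H → Prop) : Prop :=
  ∀ (X Y Z : H) (f : X ⟶ Y) (g : Y ⟶ Z), IsShortExact f g → A X → A Z → A Y

/-- `A` is closed under kernels (taken in `H`) of morphisms between its
objects. -/
def KernelClosed (A : H → Prop) : Prop :=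
  ∀ (X Y : H) (f : X ⟶ Y), A X → A Y → A (kernel f)

/-- `A` is closed under cokernels (taken in `H`) of morphisms between its
objects. -/
def CokernelClosed (A : H → Prop) : Prop :=
  ∀ (X Y : H) (f : X ⟶ Y), A X → A Y → A (cokernel f)

/-- `A` is thick: two-out-of-three for short exact sequences. -/
def ThickSub (A : H → Prop) : Prop :=
  ∀ (X Y Z : H) (f : X ⟶ Y) (g : Y ⟶ Z), IsShortExact f g →
    ((A X → A Y → A Z) ∧ (A X → A Z → A Y) ∧ (A Y → A Z → A X))


lemma sesOfEpi {X I : H} (p : X ⟶ I) [Epi p] : IsShortExact (kernel.ι p) p :=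
  ⟨kernel.condition p, ShortComplex.ShortExact.mk'
    (ShortComplex.exact_of_f_is_kernel _ (kernelIsKernel p)) inferInstance inferInstance⟩

lemma sesOfMono {I Y : H} (i : I ⟶ Y) [Mono i] : IsShortExact i (cokernel.π i) :=
  ⟨cokernel.condition i, ShortComplex.ShortExact.mk'
    (ShortComplex.exact_of_g_is_cokernel _ (cokernelIsCokernel i)) inferInstance inferInstance⟩

lemma mem_of_epi_mono (hH : Hereditary H) {A : H → Prop}
    (hsummand : SummandClosed A) (hthick : ThickSub A)
    {X I Y : H} (p : X ⟶ I) (i : I ⟶ Y) [Epi p] [Mono i]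
    (hX : A X) (hY : A Y) : A I := by
  obtain ⟨X', f', g', h, ⟨w', hse'⟩, hcom1, hcom2⟩ :=
    hH (kernel p) X I Y (kernel.ι p) p i inferInstance (sesOfEpi p)
  haveI : Epi g' := hse'.epi_g
  haveI : Mono f' := hse'.mono_f
  set P := pullback g' i with hP
  have hk'w : f' ≫ g' = (0 : kernel p ⟶ I) ≫ i := by simp [w']
  set k' : kernel p ⟶ P := pullback.lift f' 0 hk'w with hk'
  have hk'fst : k' ≫ pullback.fst g' i = f' := pullback.lift_fst _ _ _
  have hk'snd : k' ≫ pullback.snd g' i = 0 := pullback.lift_snd _ _ _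
  haveI : Mono k' := mono_of_mono_fac hk'fst
  have hlim : IsLimit (KernelFork.ofι k' hk'snd) := by
    refine KernelFork.IsLimit.ofι' k' hk'snd (fun {T} t ht => ?_)
    have htg' : (t ≫ pullback.fst g' i) ≫ g' = 0 := by
      rw [Category.assoc, pullback.condition, ← Category.assoc, ht, zero_comp]
    obtain ⟨l, hl⟩ := KernelFork.IsLimit.lift' hse'.fIsKernel (t ≫ pullback.fst g' i) htg'
    refine ⟨l, ?_⟩
    apply pullback.hom_ext
    · simpa [hk'fst] using hl
    · simp [hk'snd, ht]
  have S₃se : (ShortComplex.mk k' (pullback.snd g' i) hk'snd).ShortExact :=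
    ShortComplex.ShortExact.mk' (ShortComplex.exact_of_f_is_kernel _ hlim)
      inferInstance inferInstance
  set φ : X ⟶ P := pullback.lift h p hcom2 with hφ
  have comm12 : 𝟙 _ ≫ k' = kernel.ι p ≫ φ := by
    rw [Category.id_comp]
    symm
    apply pullback.hom_ext
    · simp [hφ, hk'fst, hcom1]
      rw [pullback.lift_fst, hcom1]
    · simp [hφ, hk'snd]
      rw [pullback.lift_snd, kernel.condition]
  have comm23 : φ ≫ pullback.snd g' i = p ≫ 𝟙 _ := by simp [hφ]; exact pullback.lift_snd _ _ _
  let ψ : ShortComplex.mk (kernel.ι p) p (kernel.condition p) ⟶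
      ShortComplex.mk k' (pullback.snd g' i) hk'snd :=
    { τ₁ := 𝟙 _, τ₂ := φ, τ₃ := 𝟙 _, comm₁₂ := comm12, comm₂₃ := comm23 }
  haveI : IsIso ψ.τ₂ :=
    ShortComplex.isIso₂_of_shortExact_of_isIso₁₃ ψ (sesOfEpi p).choose_spec S₃se
  haveI : IsIso φ := this
  have hpb : IsPullback h p g' i :=
    IsPullback.of_iso_pullback ⟨hcom2⟩ (asIso φ) (by simp [hφ]; exact pullback.lift_fst _ _ _)
      (by simp [hφ]; exact pullback.lift_snd _ _ _)
  have hfork : IsLimit ((⟨hcom2⟩ : CommSq h p g' i).kernelFork) :=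
    (CommSq.isLimitEquivIsLimitKernelFork _) hpb.isLimit
  have wS : biprod.lift h p ≫ biprod.desc g' (-i) = 0 := by
    simp [hcom2]
  haveI : Epi (biprod.desc g' (-i)) := by
    have : biprod.inl ≫ biprod.desc g' (-i) = g' := by simp
    exact epi_of_epi_fac this
  haveI : Mono (biprod.lift h p) := mono_of_isLimit_fork hfork
  have S₄se : IsShortExact (biprod.lift h p) (biprod.desc g' (-i)) :=
    ⟨wS, ShortComplex.ShortExact.mk'
      (ShortComplex.exact_of_f_is_kernel _ hfork) inferInstance inferInstance⟩
  have hmid : A (X' ⊞ I) := ((hthick _ _ _ _ _ S₄se).2.1) hX hY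
  exact hsummand I (X' ⊞ I) biprod.inr biprod.snd (by simp) hmid

/-- in a hereditary abelian `k`-category `H`, a full subcategory
closed under direct summands (and isomorphisms) is an exact abelian,
extension-closed subcategory iff it is thick. -/
theorem abelian_extClosed_iff_thick (k : Type) [Field k] [Linear k H]
    (hH : Hereditary H) (A : H → Prop)
    (hiso : IsoClosed A) (hsummand : SummandClosed A) :
    (ExtClosed A ∧ KernelClosed A ∧ CokernelClosed A) ↔ ThickSub A := by
  constructor
  · rintro ⟨hext, hker, hcoker⟩ X Y Z f g ⟨w, hse⟩
    refine ⟨fun hX hY => ?_, fun hX hZ => hext X Y Z f g ⟨w, hse⟩ hX hZ, fun hY hZ => ?_⟩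
    · exact hiso _ _ (IsColimit.coconePointUniqueUpToIso (cokernelIsCokernel f) hse.gIsCokernel)
        (hcoker X Y f hX hY)
    · exact hiso _ _ (IsLimit.conePointUniqueUpToIso (kernelIsKernel g) hse.fIsKernel)
        (hker Y Z g hY hZ)
  · intro hthick
    refine ⟨fun X Y Z f g hse hX hZ => (hthick _ _ _ _ _ hse).2.1 hX hZ, ?_, ?_⟩
    · intro X Y f hX hY
      have hI : A (Abelian.image f) := mem_of_epi_mono hH hsummand hthick
        (Abelian.factorThruImage f) (Abelian.image.ι f) hX hY
      have hk : A (kernel (Abelian.factorThruImage f)) :=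
        (hthick _ _ _ _ _ (sesOfEpi (Abelian.factorThruImage f))).2.2 hX hI
      exact hiso _ _ (((kernelIsoOfEq (Abelian.image.fac f).symm).trans
        (kernelCompMono (Abelian.factorThruImage f) (Abelian.image.ι f))).symm) hk
    · intro X Y f hX hY
      have hI : A (Abelian.image f) := mem_of_epi_mono hH hsummand hthick
        (Abelian.factorThruImage f) (Abelian.image.ι f) hX hY
      have hc : A (cokernel (Abelian.image.ι f)) :=
        (hthick _ _ _ _ _ (sesOfMono (Abelian.image.ι f))).1 hI hY
      exact hiso _ _ (((cokernelIsoOfEq (Abelian.image.fac f).symm).trans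
        (cokernelEpiComp (Abelian.factorThruImage f) (Abelian.image.ι f))).symm) hc
end

section
/- Let Q be an acyclic quiver, d a prehomogeneous dimension vector, and V = M(d) the (rigid) general representation of dimension vector d. Then the semi-stable subcategory rep(Q)_d equals V^⊥ = {M : Hom(V,M) = 0 = Ext^1(V,M)}. -/
open Matrix BigOperators

/-- A finite quiver: `n` vertices, `a` arrows with source and target maps. -/
structure FinQuiver where
  n : ℕ
  a : ℕ
  src : Fin a → Fin n
  tgt : Fin a → Fin n

namespace FinQuiver

/-- A finite quiver is acyclic iff it admits a topological ordering of vertices. -/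
def Acyclic (Q : FinQuiver) : Prop :=
  ∃ h : Fin Q.n → ℕ, ∀ x, h (Q.src x) < h (Q.tgt x)

/-- Connectivity of the underlying graph. -/
def Connected (Q : FinQuiver) : Prop :=
  ∀ S : Finset (Fin Q.n), S.Nonempty → S ≠ Finset.univ →
    ∃ x, (Q.src x ∈ S ∧ Q.tgt x ∉ S) ∨ (Q.tgt x ∈ S ∧ Q.src x ∉ S)

/-- The Euler form ⟨d,e⟩ = Σ_i d_i e_i − Σ_{α : i → j} d_i e_j. -/
def euler (Q : FinQuiver) (d e : Fin Q.n → ℤ) : ℤ :=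
  (∑ i, d i * e i) - ∑ x, d (Q.src x) * e (Q.tgt x)

/-- A (possibly disconnected) Dynkin quiver: acyclic with positive definite Tits form. -/
def IsDynkin (Q : FinQuiver) : Prop :=
  Q.Acyclic ∧ ∀ d : Fin Q.n → ℤ, d ≠ 0 → 0 < Q.euler d d

/-- `δ` is the null root: positive, isotropic, and every isotropic vector is an
integer multiple of `δ`. -/
def IsNullRoot (Q : FinQuiver) (δ : Fin Q.n → ℤ) : Prop :=
  (∀ i, 0 < δ i) ∧ Q.euler δ δ = 0 ∧
    ∀ d : Fin Q.n → ℤ, Q.euler d d = 0 → ∃ m : ℤ, d = m • δ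

/-- A Euclidean (affine) quiver: connected, acyclic, positive semidefinite Tits form
with a null root. -/
def IsEuclidean (Q : FinQuiver) : Prop :=
  Q.Acyclic ∧ Q.Connected ∧ (∀ d, 0 ≤ Q.euler d d) ∧ ∃ δ, Q.IsNullRoot δ

end FinQuiver

/-- A finite-dimensional representation of `Q` over `k`: dimensions at each vertex,
and a matrix for each arrow. -/
structure QRep (k : Type) [Field k] (Q : FinQuiver) where
  d : Fin Q.n → ℕ
  mat : ∀ x : Fin Q.a, Matrix (Fin (d (Q.tgt x))) (Fin (d (Q.src x))) k

namespace QRep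

variable {k : Type} [Field k] {Q : FinQuiver}

/-- The dimension vector of a representation, as an integer vector. -/
def dimVec (M : QRep k Q) : Fin Q.n → ℤ := fun i => (M.d i : ℤ)

/-- The space of morphisms of representations `M → N`. -/
def homSpace (M N : QRep k Q) :
    Submodule k (∀ i, Matrix (Fin (N.d i)) (Fin (M.d i)) k) where
  carrier := {f | ∀ x, f (Q.tgt x) * M.mat x = N.mat x * f (Q.src x)}
  add_mem' := by
    intro f g hf hg x
    simp only [Pi.add_apply, Matrix.add_mul, Matrix.mul_add, hf x, hg x]
  zero_mem' := by intro x; simp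
  smul_mem' := by
    intro c f hf x
    simp only [Pi.smul_apply, Matrix.smul_mul, Matrix.mul_smul, hf x]

/-- The standard map whose kernel is `Hom(M,N)` and cokernel is `Ext¹(M,N)`. -/
def extMap (M N : QRep k Q) :
    (∀ i, Matrix (Fin (N.d i)) (Fin (M.d i)) k) →ₗ[k]
    (∀ x : Fin Q.a, Matrix (Fin (N.d (Q.tgt x))) (Fin (M.d (Q.src x))) k) where
  toFun f := fun x => f (Q.tgt x) * M.mat x - N.mat x * f (Q.src x)
  map_add' := by
    intro f g; funext x
    simp only [Pi.add_apply, Matrix.add_mul, Matrix.mul_add]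
    abel
  map_smul' := by
    intro c f; funext x
    simp only [Pi.smul_apply, Matrix.smul_mul, Matrix.mul_smul, RingHom.id_apply,
      smul_sub]

/-- dim_k Hom(M,N). -/
noncomputable def homDim (M N : QRep k Q) : ℕ :=
  Module.finrank k (homSpace M N)

/-- dim_k Ext¹(M,N), defined as the dimension of the cokernel of `extMap`. -/
noncomputable def extDim (M N : QRep k Q) : ℕ :=
  Module.finrank k
    ((∀ x : Fin Q.a, Matrix (Fin (N.d (Q.tgt x))) (Fin (M.d (Q.src x))) k) ⧸
      LinearMap.range (extMap M N))

/-- Isomorphism of representations. -/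
def IsoRep (M N : QRep k Q) : Prop :=
  ∃ f ∈ homSpace M N, ∀ i, Function.Bijective (Matrix.mulVecLin (f i))

/-- `L` is (the source of a monomorphism into) a subrepresentation of `M`. -/
def IsSubrep (L M : QRep k Q) : Prop :=
  ∃ f ∈ homSpace L M, ∀ i, Function.Injective (Matrix.mulVecLin (f i))

/-- `L` is a direct summand of `M` (split monomorphism with retraction). -/
def IsSummand (L M : QRep k Q) : Prop :=
  ∃ f ∈ homSpace L M, ∃ g ∈ homSpace M L, ∀ i, g i * f i = 1

/-- `M` is indecomposable: nonzero, and its endomorphism ring has no nontrivial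
idempotents. -/
def Indec (M : QRep k Q) : Prop :=
  (∃ i, M.d i ≠ 0) ∧
    ∀ f ∈ homSpace M M, (∀ i, f i * f i = f i) → f = 0 ∨ f = 1

/-- An exceptional representation: indecomposable and rigid. -/
def Exceptional (M : QRep k Q) : Prop :=
  Indec M ∧ extDim M M = 0

/-- `(f, g)` form a short exact sequence `0 → A → B → C → 0` of representations. -/
def IsSES (A B C : QRep k Q)
    (f : ∀ i, Matrix (Fin (B.d i)) (Fin (A.d i)) k)
    (g : ∀ i, Matrix (Fin (C.d i)) (Fin (B.d i)) k) : Prop :=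
  f ∈ homSpace A B ∧ g ∈ homSpace B C ∧
    ∀ i, Function.Injective (Matrix.mulVecLin (f i)) ∧
      Function.Surjective (Matrix.mulVecLin (g i)) ∧
      LinearMap.range (Matrix.mulVecLin (f i)) = LinearMap.ker (Matrix.mulVecLin (g i))

/-- A thick (= abelian and extension-closed, since rep(Q) is hereditary) full
subcategory: closed under isomorphism, direct summands and two-out-of-three for
short exact sequences. -/
def Thick (P : QRep k Q → Prop) : Prop :=
  (∀ M N, IsoRep M N → P M → P N) ∧
  (∀ L M, IsSummand L M → P M → P L) ∧
  (∀ A B C f g, IsSES A B C f g →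
    ((P A → P B → P C) ∧ (P A → P C → P B) ∧ (P B → P C → P A)))

/-- `P` is the smallest thick subcategory containing `S`. -/
def GeneratedBy (P : QRep k Q → Prop) (S : Set (QRep k Q)) : Prop :=
  Thick P ∧ (∀ X ∈ S, P X) ∧
    ∀ P' : QRep k Q → Prop, Thick P' → (∀ X ∈ S, P' X) → ∀ M, P M → P' M

/-- An exceptional sequence. -/
def ExcSeq {r : ℕ} (E : Fin r → QRep k Q) : Prop :=
  (∀ i, Exceptional (E i) ∧ homDim (E i) (E i) = 1) ∧
    ∀ i j : Fin r, i < j → homDim (E i) (E j) = 0 ∧ extDim (E i) (E j) = 0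

/-- King's criterion for `⟨d,−⟩`-semi-stability. -/
def SemiStable (d : Fin Q.n → ℤ) (M : QRep k Q) : Prop :=
  Q.euler d M.dimVec = 0 ∧ ∀ L : QRep k Q, IsSubrep L M → Q.euler d L.dimVec ≤ 0

/-- `M` is regular: every indecomposable summand pairs to zero with the null root. -/
def RegularRep (δ : Fin Q.n → ℤ) (M : QRep k Q) : Prop :=
  ∀ L, IsSummand L M → Indec L → Q.euler δ L.dimVec = 0

/-- `M` is in the right perpendicular category of `V`. -/
def RPerp (V M : QRep k Q) : Prop := homDim V M = 0 ∧ extDim V M = 0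

/-- `M` is in the left perpendicular category of `V`. -/
def LPerp (V M : QRep k Q) : Prop := homDim M V = 0 ∧ extDim M V = 0

/-- `P` is a projective representation (Ext¹(P,−) = 0). -/
def IsProjRep (P : QRep k Q) : Prop := ∀ M : QRep k Q, extDim P M = 0

end QRep

/-- `α` is a Schur root: the dimension vector of an indecomposable representation
with trivial endomorphism ring. -/
def IsSchurRoot (k : Type) [Field k] (Q : FinQuiver) (α : Fin Q.n → ℤ) : Prop :=
  ∃ M : QRep k Q, M.dimVec = α ∧ QRep.Indec M ∧ QRep.homDim M M = 1

/-- `ext(α,β) = 0`: some representations of these dimension vectors have no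
extensions. -/
def ExtZero (k : Type) [Field k] (Q : FinQuiver) (α β : Fin Q.n → ℤ) : Prop :=
  ∃ M N : QRep k Q, M.dimVec = α ∧ N.dimVec = β ∧ QRep.extDim M N = 0

/-- Kac's characterization of the canonical decomposition: `c` is the canonical
decomposition of `d` iff the entries sum to `d`, are Schur roots, and are pairwise
ext-orthogonal. -/
def IsCanonDecomp (k : Type) [Field k] (Q : FinQuiver) (d : Fin Q.n → ℤ)
    (c : List (Fin Q.n → ℤ)) : Prop :=
  c.sum = d ∧ (∀ α ∈ c, IsSchurRoot k Q α) ∧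
    ∀ i j : Fin c.length, i ≠ j → ExtZero k Q (c.get i) (c.get j)


section Aux

open QRep

variable {k : Type} [Field k] {Q : FinQuiver}

/-- matrices are determined by their `mulVecLin`. -/
lemma mat_ext {m n : ℕ} {A B : Matrix (Fin m) (Fin n) k}
    (h : A.mulVecLin = B.mulVecLin) : A = B :=
  Matrix.toLin'.injective (by rw [Matrix.toLin'_apply', Matrix.toLin'_apply']; exact h)

lemma mvl_toMatrix' {m n : ℕ} (h : (Fin n → k) →ₗ[k] (Fin m → k)) :
    (LinearMap.toMatrix' h).mulVecLin = h := by
  rw [← Matrix.toLin'_apply']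
  exact Matrix.toLin'_toMatrix' h

/-- homSpace is the kernel of extMap. -/
lemma homSpace_eq_ker (M N : QRep k Q) :
    homSpace M N = LinearMap.ker (extMap M N) := by
  ext f
  simp only [homSpace, Submodule.mem_mk, AddSubmonoid.mem_mk, AddSubsemigroup.mem_mk,
    Set.mem_setOf_eq, LinearMap.mem_ker, extMap, LinearMap.coe_mk, AddHom.coe_mk,
    funext_iff, Pi.zero_apply, sub_eq_zero]

/-- The Euler form computes `dim Hom − dim Ext¹`. -/
lemma euler_eq_homDim_sub_extDim (M N : QRep k Q) :
    Q.euler M.dimVec N.dimVec = (homDim M N : ℤ) - (extDim M N : ℤ) := by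
  classical
  have h1 := LinearMap.finrank_range_add_finrank_ker (extMap M N)
  have h2 := (LinearMap.range (extMap M N)).finrank_quotient_add_finrank
  have hdom : Module.finrank k (∀ i, Matrix (Fin (N.d i)) (Fin (M.d i)) k)
      = ∑ i, N.d i * M.d i := by
    rw [Module.finrank_pi_fintype k]
    congr 1; funext i
    rw [Module.finrank_matrix]
    simp [Module.finrank_self]
  have hcod : Module.finrank k
      (∀ x : Fin Q.a, Matrix (Fin (N.d (Q.tgt x))) (Fin (M.d (Q.src x))) k)
      = ∑ x, N.d (Q.tgt x) * M.d (Q.src x) := by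
    rw [Module.finrank_pi_fintype k]
    congr 1; funext x
    rw [Module.finrank_matrix]
    simp [Module.finrank_self]
  have hker : Module.finrank k (LinearMap.ker (extMap M N)) = homDim M N := by
    rw [homDim, homSpace_eq_ker]
  rw [hdom, hker] at h1
  rw [hcod] at h2
  have h2' : extDim M N + Module.finrank k (LinearMap.range (extMap M N))
      = ∑ x, N.d (Q.tgt x) * M.d (Q.src x) := h2
  have key : (homDim M N : ℤ) - (extDim M N : ℤ)
      = ((∑ i, N.d i * M.d i : ℕ) : ℤ) - ((∑ x, N.d (Q.tgt x) * M.d (Q.src x) : ℕ) : ℤ) := by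
    omega
  rw [key, FinQuiver.euler]
  push_cast
  simp only [QRep.dimVec]
  congr 1
  · exact Finset.sum_congr rfl (fun i _ => by ring)
  · exact Finset.sum_congr rfl (fun x _ => by ring)

lemma extDim_eq_zero_iff (M N : QRep k Q) :
    extDim M N = 0 ↔ LinearMap.range (extMap M N) = ⊤ := by
  rw [extDim, Module.finrank_zero_iff (R := k), Submodule.Quotient.subsingleton_iff]

lemma homDim_eq_zero_iff (M N : QRep k Q) :
    homDim M N = 0 ↔ homSpace M N = ⊥ := by
  rw [homDim, Submodule.finrank_eq_zero]

end Aux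


section Aux2

open QRep

variable {k : Type} [Field k] {Q : FinQuiver}

/-- Ext-surjectivity transfers along a surjection `V ↠ L`. -/
lemma extRange_top_of_surj (V L : QRep k Q)
    (p : ∀ i, Matrix (Fin (L.d i)) (Fin (V.d i)) k)
    (hp : p ∈ homSpace V L) (hsurj : ∀ i, Function.Surjective (p i).mulVecLin)
    (hVV : LinearMap.range (extMap V V) = ⊤) :
    LinearMap.range (extMap V L) = ⊤ := by
  classical
  rw [eq_top_iff]
  rintro η -
  choose s hs using fun x : Fin Q.a =>
    LinearMap.exists_rightInverse_of_surjective ((p (Q.tgt x)).mulVecLin)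
      (LinearMap.range_eq_top.mpr (hsurj (Q.tgt x)))
  set ζ : ∀ x : Fin Q.a, Matrix (Fin (V.d (Q.tgt x))) (Fin (V.d (Q.src x))) k :=
    fun x => LinearMap.toMatrix' (s x ∘ₗ (η x).mulVecLin) with hζdef
  have hζ : ∀ x, p (Q.tgt x) * ζ x = η x := by
    intro x
    apply mat_ext
    rw [Matrix.mulVecLin_mul, hζdef]
    simp only [mvl_toMatrix']
    rw [← LinearMap.comp_assoc, hs x, LinearMap.id_comp]
  have hmem : ζ ∈ LinearMap.range (extMap V V) := by rw [hVV]; trivial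
  obtain ⟨g, hg⟩ := hmem
  refine ⟨fun i => p i * g i, ?_⟩
  funext x
  have hgx : g (Q.tgt x) * V.mat x - V.mat x * g (Q.src x) = ζ x := congrFun hg x
  show p (Q.tgt x) * g (Q.tgt x) * V.mat x - L.mat x * (p (Q.src x) * g (Q.src x)) = η x
  rw [← Matrix.mul_assoc (L.mat x), ← hp x, Matrix.mul_assoc (p (Q.tgt x)),
    Matrix.mul_assoc (p (Q.tgt x)), ← Matrix.mul_sub, hgx, hζ x]

set_option maxHeartbeats 1000000 in
/-- The image of a morphism `f : V → M` is a subrepresentation which is a quotient of `V`. -/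
lemma exists_image (V M : QRep k Q) (f : ∀ i, Matrix (Fin (M.d i)) (Fin (V.d i)) k)
    (hf : f ∈ homSpace V M) :
    ∃ L : QRep k Q, IsSubrep L M ∧ ∃ p ∈ homSpace V L,
      (∀ i, Function.Surjective (p i).mulVecLin) ∧ (f ≠ 0 → p ≠ 0) := by
  classical
  set W : ∀ i, Submodule k (Fin (M.d i) → k) := fun i => LinearMap.range (f i).mulVecLin
    with hWdef
  let e : ∀ i, (Fin (Module.finrank k (W i)) → k) ≃ₗ[k] W i :=
    fun i => (Module.finBasis k (W i)).equivFun.symm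
  have hsub : ∀ x : Fin Q.a, ∀ c,
      ((M.mat x).mulVecLin ∘ₗ (W (Q.src x)).subtype ∘ₗ (e (Q.src x)).toLinearMap) c
        ∈ W (Q.tgt x) := by
    intro x c
    obtain ⟨v, hv⟩ := (e (Q.src x) c).2
    simp only [LinearMap.comp_apply, Submodule.coe_subtype, LinearEquiv.coe_coe]
    rw [← hv, ← LinearMap.comp_apply, ← Matrix.mulVecLin_mul, ← hf x, Matrix.mulVecLin_mul]
    exact ⟨(V.mat x).mulVecLin v, rfl⟩
  let q : ∀ x : Fin Q.a, (Fin (Module.finrank k (W (Q.src x))) → k) →ₗ[k] W (Q.tgt x) :=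
    fun x => LinearMap.codRestrict (W (Q.tgt x))
      ((M.mat x).mulVecLin ∘ₗ (W (Q.src x)).subtype ∘ₗ (e (Q.src x)).toLinearMap) (hsub x)
  refine ⟨{ d := fun i => Module.finrank k (W i),
            mat := fun x => LinearMap.toMatrix' ((e (Q.tgt x)).symm.toLinearMap ∘ₗ q x) },
          ⟨fun i => LinearMap.toMatrix' ((W i).subtype ∘ₗ (e i).toLinearMap), ?_, ?_⟩,
          fun i => LinearMap.toMatrix' ((e i).symm.toLinearMap ∘ₗ
            (f i).mulVecLin.rangeRestrict), ?_, ?_, ?_⟩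
  · -- ι is a morphism
    intro x
    apply mat_ext
    rw [Matrix.mulVecLin_mul, Matrix.mulVecLin_mul]
    simp only [mvl_toMatrix']
    apply LinearMap.ext
    intro v
    simp only [LinearMap.comp_apply, LinearEquiv.coe_coe, Submodule.coe_subtype,
      LinearEquiv.apply_symm_apply]
    rfl
  · -- ι is injective
    intro i
    rw [mvl_toMatrix']
    simp only [LinearMap.coe_comp, Submodule.coe_subtype, LinearEquiv.coe_coe]
    exact Subtype.val_injective.comp (e i).injective
  · -- p is a morphism
    intro x
    apply mat_ext
    rw [Matrix.mulVecLin_mul, Matrix.mulVecLin_mul]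
    simp only [mvl_toMatrix']
    apply LinearMap.ext
    intro v
    simp only [LinearMap.comp_apply, LinearEquiv.coe_coe]
    refine congrArg (e (Q.tgt x)).symm (Subtype.ext ?_)
    show (f (Q.tgt x)).mulVecLin ((V.mat x).mulVecLin v)
      = (M.mat x).mulVecLin (((W (Q.src x)).subtype ∘ₗ (e (Q.src x)).toLinearMap)
          ((e (Q.src x)).symm ((f (Q.src x)).mulVecLin.rangeRestrict v)))
    simp only [LinearMap.comp_apply, Submodule.coe_subtype, LinearEquiv.coe_coe,
      LinearEquiv.apply_symm_apply]
    have : ((f (Q.src x)).mulVecLin.rangeRestrict v : Fin (M.d (Q.src x)) → k)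
        = (f (Q.src x)).mulVecLin v := rfl
    rw [this, ← LinearMap.comp_apply, ← LinearMap.comp_apply, ← Matrix.mulVecLin_mul,
      ← Matrix.mulVecLin_mul, hf x]
  · -- p is surjective
    intro i
    rw [mvl_toMatrix']
    simp only [LinearMap.coe_comp, LinearEquiv.coe_coe]
    exact (e i).symm.surjective.comp (f i).mulVecLin.surjective_rangeRestrict
  · -- p is nonzero if f is
    intro hf0 hp0
    apply hf0
    funext i
    have hpi : LinearMap.toMatrix' ((e i).symm.toLinearMap ∘ₗ
        (f i).mulVecLin.rangeRestrict) = 0 := congrFun hp0 i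
    have hmvl : ((e i).symm.toLinearMap ∘ₗ (f i).mulVecLin.rangeRestrict) = 0 := by
      have := congrArg Matrix.mulVecLin hpi
      rwa [mvl_toMatrix', Matrix.mulVecLin_zero] at this
    have hrr : ∀ v, (f i).mulVecLin.rangeRestrict v = 0 := by
      intro v
      have h2 := congrFun (congrArg (fun (g : _ →ₗ[k] _) => (g : _ → _)) hmvl) v
      simp only [LinearMap.comp_apply, LinearMap.zero_apply, LinearEquiv.coe_coe] at h2
      exact (e i).symm.injective (h2.trans ((e i).symm.toLinearMap.map_zero).symm)
    show f i = 0
    apply mat_ext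
    rw [Matrix.mulVecLin_zero]
    apply LinearMap.ext
    intro v
    have hv : (f i).mulVecLin v = ((f i).mulVecLin.rangeRestrict v : Fin (M.d i) → k) := rfl
    simp [hv, hrr v]

end Aux2

open QRep in
/-- for a prehomogeneous dimension vector `d` with rigid general
representation `V = M(d)` (i.e. a rigid `V` of dimension vector `d`), the
semi-stable subcategory rep(Q)_d equals `V^⊥`. -/
theorem semistable_eq_perp (k : Type) [Field k] [IsAlgClosed k]
    (Q : FinQuiver) (hQ : Q.Acyclic) (V : QRep k Q) (hV : extDim V V = 0) :
    ∀ M : QRep k Q, SemiStable V.dimVec M ↔ RPerp V M := by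
  intro M
  constructor
  · rintro ⟨heuler, hstab⟩
    rw [euler_eq_homDim_sub_extDim] at heuler
    have hhom : homDim V M = 0 := by
      by_contra h0
      have hne : homSpace V M ≠ ⊥ := fun hb => h0 ((homDim_eq_zero_iff V M).2 hb)
      obtain ⟨f, hf, hfne⟩ := Submodule.exists_mem_ne_zero_of_ne_bot hne
      obtain ⟨L, hLsub, p, hp, hpsurj, hpne⟩ := exists_image V M f hf
      have hVL_ext : extDim V L = 0 :=
        (extDim_eq_zero_iff V L).2 (extRange_top_of_surj V L p hp hpsurj
          ((extDim_eq_zero_iff V V).1 hV))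
      have hVL_hom : homDim V L ≠ 0 := by
        intro h
        rw [homDim_eq_zero_iff, Submodule.eq_bot_iff] at h
        exact (hpne hfne) (h p hp)
      have hle := hstab L hLsub
      rw [euler_eq_homDim_sub_extDim] at hle
      omega
    exact ⟨hhom, by omega⟩
  · rintro ⟨h1, h2⟩
    constructor
    · rw [euler_eq_homDim_sub_extDim, h1, h2]
      ring
    · rintro L ⟨g, hg, hginj⟩
      have hVL : homDim V L = 0 := by
        rw [homDim_eq_zero_iff, Submodule.eq_bot_iff]
        intro h hh
        have hmem : (fun i => g i * h i) ∈ homSpace V M := by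
          intro x
          show g (Q.tgt x) * h (Q.tgt x) * V.mat x = M.mat x * (g (Q.src x) * h (Q.src x))
          rw [Matrix.mul_assoc, hh x, ← Matrix.mul_assoc, hg x, Matrix.mul_assoc]
        have hz : (fun i => g i * h i) = 0 := by
          have hb := (homDim_eq_zero_iff V M).1 h1
          rw [Submodule.eq_bot_iff] at hb
          exact hb _ hmem
        funext i
        have hzi : g i * h i = 0 := congrFun hz i
        show h i = 0
        apply mat_ext
        rw [Matrix.mulVecLin_zero]
        apply LinearMap.ext
        intro v
        apply hginj i
        have := congrArg Matrix.mulVecLin hzi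
        rw [Matrix.mulVecLin_mul, Matrix.mulVecLin_zero] at this
        have hv := congrFun (congrArg (fun (φ : _ →ₗ[k] _) => (φ : _ → _)) this) v
        simpa using hv
      rw [euler_eq_homDim_sub_extDim, hVL]
      simp
end

section
/- Let Q be an acyclic quiver and V a rigid representation. If M is a representation with ⟨dim V, dim M⟩ = 0 and ⟨dim V, dim M'⟩ ≤ 0 for every subrepresentation M' ⊆ M, then Hom(V,M) = 0 = Ext^1(V,M). -/
open Matrix BigOperators

namespace QRep
variable {k : Type} [Field k] {Q : FinQuiver}

-- AUX LEMMAS START HERE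

lemma mem_homSpace_iff {M N : QRep k Q} (f : ∀ i, Matrix (Fin (N.d i)) (Fin (M.d i)) k) :
    f ∈ homSpace M N ↔ ∀ x, f (Q.tgt x) * M.mat x = N.mat x * f (Q.src x) := Iff.rfl

lemma homSpace_eq_ker (M N : QRep k Q) :
    homSpace M N = LinearMap.ker (extMap M N) := by
  ext f
  simp [mem_homSpace_iff, LinearMap.mem_ker, extMap, LinearMap.coe_mk, funext_iff,
    sub_eq_zero]

lemma euler_eq (M N : QRep k Q) :
    Q.euler M.dimVec N.dimVec = (homDim M N : ℤ) - (extDim M N : ℤ) := by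
  classical
  have hdom : Module.finrank k (∀ i, Matrix (Fin (N.d i)) (Fin (M.d i)) k)
      = ∑ i, N.d i * M.d i := by
    rw [Module.finrank_pi_fintype]
    simp [Module.finrank_matrix]
  have hcod : Module.finrank k
      (∀ x : Fin Q.a, Matrix (Fin (N.d (Q.tgt x))) (Fin (M.d (Q.src x))) k)
      = ∑ x, N.d (Q.tgt x) * M.d (Q.src x) := by
    rw [Module.finrank_pi_fintype]
    simp [Module.finrank_matrix]
  have h1 : Module.finrank k (LinearMap.range (extMap M N)) + homDim M N
      = ∑ i, N.d i * M.d i := by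
    have h := LinearMap.finrank_range_add_finrank_ker (extMap M N)
    rw [hdom] at h
    rw [← h, homDim, homSpace_eq_ker]
  have h2 : extDim M N + Module.finrank k (LinearMap.range (extMap M N))
      = ∑ x, N.d (Q.tgt x) * M.d (Q.src x) := by
    have h := Submodule.finrank_quotient_add_finrank (LinearMap.range (extMap M N))
    rw [hcod] at h
    exact h
  have he : Q.euler M.dimVec N.dimVec
      = ((∑ i, N.d i * M.d i : ℕ) : ℤ) - ((∑ x, N.d (Q.tgt x) * M.d (Q.src x) : ℕ) : ℤ) := by
    unfold FinQuiver.euler dimVec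
    push_cast
    rw [Finset.sum_congr rfl fun i _ => mul_comm ((M.d i : ℤ)) _,
      Finset.sum_congr rfl fun x _ => mul_comm ((M.d (Q.src x) : ℤ)) _]
  rw [he]
  omega

lemma extMap_surjective_of_extDim_zero (M N : QRep k Q) (h : extDim M N = 0) :
    Function.Surjective (extMap M N) := by
  rw [extDim, Module.finrank_zero_iff, Submodule.Quotient.subsingleton_iff,
    ] at h
  exact LinearMap.range_eq_top.mp h

lemma extDim_eq_zero_of_surjective (M N : QRep k Q)
    (h : Function.Surjective (extMap M N)) : extDim M N = 0 := by
  rw [extDim, Module.finrank_zero_iff, Submodule.Quotient.subsingleton_iff,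
    LinearMap.range_eq_top]
  exact h

lemma mulVecLin_eq_toLin' {m n : ℕ} (A : Matrix (Fin m) (Fin n) k) :
    A.mulVecLin = Matrix.toLin' A := rfl

lemma matrix_eq_of_toLin'_eq {m n : ℕ} {A B : Matrix (Fin m) (Fin n) k}
    (h : Matrix.toLin' A = Matrix.toLin' B) : A = B :=
  Matrix.toLin'.injective h

lemma exists_image (V M : QRep k Q) (f : ∀ i, Matrix (Fin (M.d i)) (Fin (V.d i)) k)
    (hf : f ∈ homSpace V M) (hne : f ≠ 0) :
    ∃ (M' : QRep k Q) (π : ∀ i, Matrix (Fin (M'.d i)) (Fin (V.d i)) k),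
      IsSubrep M' M ∧ π ∈ homSpace V M' ∧ π ≠ 0 ∧
      (∀ i, Function.Surjective (Matrix.mulVecLin (π i))) := by
  classical
  set W : ∀ i, Submodule k (Fin (M.d i) → k) :=
    fun i => LinearMap.range (f i).mulVecLin with hW
  let r : Fin Q.n → ℕ := fun i => Module.finrank k (W i)
  let e : ∀ i, (Fin (r i) → k) ≃ₗ[k] W i :=
    fun i => (Module.finBasis k (W i)).equivFun.symm
  have hmem : ∀ x, ∀ v ∈ W (Q.src x), (M.mat x).mulVecLin v ∈ W (Q.tgt x) := by
    rintro x v ⟨u, rfl⟩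
    refine ⟨(V.mat x).mulVecLin u, ?_⟩
    have h := congrArg Matrix.mulVecLin (hf x)
    rw [Matrix.mulVecLin_mul, Matrix.mulVecLin_mul] at h
    simpa using LinearMap.congr_fun h u
  let T : ∀ x, W (Q.src x) →ₗ[k] W (Q.tgt x) :=
    fun x => ((M.mat x).mulVecLin).restrict (hmem x)
  let M' : QRep k Q :=
    { d := r
      mat := fun x => LinearMap.toMatrix'
        ((e (Q.tgt x)).symm.toLinearMap ∘ₗ T x ∘ₗ (e (Q.src x)).toLinearMap) }
  let ι : ∀ i, Matrix (Fin (M.d i)) (Fin (r i)) k :=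
    fun i => LinearMap.toMatrix' ((W i).subtype ∘ₗ (e i).toLinearMap)
  let π : ∀ i, Matrix (Fin (r i)) (Fin (V.d i)) k :=
    fun i => LinearMap.toMatrix' ((e i).symm.toLinearMap ∘ₗ (f i).mulVecLin.rangeRestrict)
  have hπlin : ∀ i, (π i).mulVecLin
      = (e i).symm.toLinearMap ∘ₗ (f i).mulVecLin.rangeRestrict := by
    intro i
    rw [mulVecLin_eq_toLin', Matrix.toLin'_toMatrix']
  have hιlin : ∀ i, (ι i).mulVecLin = (W i).subtype ∘ₗ (e i).toLinearMap := by
    intro i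
    rw [mulVecLin_eq_toLin', Matrix.toLin'_toMatrix']
  have hMlin : ∀ x, (M'.mat x).mulVecLin
      = (e (Q.tgt x)).symm.toLinearMap ∘ₗ T x ∘ₗ (e (Q.src x)).toLinearMap := by
    intro x
    rw [mulVecLin_eq_toLin', Matrix.toLin'_toMatrix']
  refine ⟨M', π, ⟨ι, ?_, ?_⟩, ?_, ?_, ?_⟩
  · -- ι ∈ homSpace M' M
    intro x
    apply matrix_eq_of_toLin'_eq
    rw [← mulVecLin_eq_toLin', ← mulVecLin_eq_toLin', Matrix.mulVecLin_mul,
      Matrix.mulVecLin_mul, hιlin, hMlin, hιlin]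
    ext v
    simp [T, LinearMap.restrict_apply]
  · -- ι injective
    intro i
    rw [hιlin]
    exact (W i).injective_subtype.comp (e i).injective
  · -- π ∈ homSpace V M'
    intro x
    apply matrix_eq_of_toLin'_eq
    rw [← mulVecLin_eq_toLin', ← mulVecLin_eq_toLin', Matrix.mulVecLin_mul,
      Matrix.mulVecLin_mul, hπlin, hMlin, hπlin]
    refine LinearMap.ext fun v => ?_
    simp only [LinearMap.comp_apply, LinearEquiv.coe_coe, LinearEquiv.apply_symm_apply]
    congr 1
    apply Subtype.ext
    have h := congrArg Matrix.mulVecLin (hf x)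
    rw [Matrix.mulVecLin_mul, Matrix.mulVecLin_mul] at h
    simpa [T, LinearMap.restrict_apply] using LinearMap.congr_fun h v
  · -- π ≠ 0
    intro hπ0
    apply hne
    funext i
    show f i = 0
    have hz : (π i).mulVecLin = 0 := by rw [congrFun hπ0 i]; simp
    rw [hπlin] at hz
    have hm : (f i).mulVecLin = 0 := by
      refine LinearMap.ext fun v => ?_
      have h0 : (e i).symm ((f i).mulVecLin.rangeRestrict v) = 0 := LinearMap.congr_fun hz v
      have h1 : (f i).mulVecLin.rangeRestrict v = 0 :=
        ((e i).symm.map_eq_zero_iff).mp h0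
      have h2 := congrArg ((W i).subtype) h1
      simpa using h2
    apply matrix_eq_of_toLin'_eq
    rw [← mulVecLin_eq_toLin', hm, ← mulVecLin_eq_toLin', Matrix.mulVecLin_zero]
  · -- π surjective
    intro i
    rw [hπlin]
    exact (e i).symm.surjective.comp (f i).mulVecLin.surjective_rangeRestrict


theorem king_aux (V M : QRep k Q) (hV : extDim V V = 0)
    (h1 : Q.euler V.dimVec M.dimVec = 0)
    (h2 : ∀ L : QRep k Q, IsSubrep L M → Q.euler V.dimVec L.dimVec ≤ 0) :
    homDim V M = 0 ∧ extDim V M = 0 := by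
  classical
  have hVsurj := extMap_surjective_of_extDim_zero V V hV
  have hbot : homSpace V M = ⊥ := by
    rw [Submodule.eq_bot_iff]
    intro f hfmem
    by_contra hne
    obtain ⟨M', π, hsub, hπmem, hπne, hπsurj⟩ := exists_image V M f hfmem hne
    have hsec : ∀ i, ∃ s : (Fin (M'.d i) → k) →ₗ[k] (Fin (V.d i) → k),
        (π i).mulVecLin ∘ₗ s = LinearMap.id := fun i =>
      LinearMap.exists_rightInverse_of_surjective _ (LinearMap.range_eq_top.mpr (hπsurj i))
    choose s hs using hsec
    have hext : extDim V M' = 0 := by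
      apply extDim_eq_zero_of_surjective
      intro z
      obtain ⟨g, hg⟩ := hVsurj (fun x => LinearMap.toMatrix' (s (Q.tgt x) ∘ₗ (z x).mulVecLin))
      refine ⟨fun i => π i * g i, ?_⟩
      funext x
      have hgx : g (Q.tgt x) * V.mat x - V.mat x * g (Q.src x)
          = LinearMap.toMatrix' (s (Q.tgt x) ∘ₗ (z x).mulVecLin) := congrFun hg x
      have hπx := hπmem x
      show (π (Q.tgt x) * g (Q.tgt x)) * V.mat x - M'.mat x * (π (Q.src x) * g (Q.src x)) = z x
      have e1 : M'.mat x * (π (Q.src x) * g (Q.src x))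
          = π (Q.tgt x) * (V.mat x * g (Q.src x)) := by
        rw [← Matrix.mul_assoc, ← hπx, Matrix.mul_assoc]
      rw [e1, Matrix.mul_assoc, ← Matrix.mul_sub, hgx]
      apply matrix_eq_of_toLin'_eq
      rw [← mulVecLin_eq_toLin', ← mulVecLin_eq_toLin', Matrix.mulVecLin_mul,
        mulVecLin_eq_toLin' (LinearMap.toMatrix' (s (Q.tgt x) ∘ₗ (z x).mulVecLin)),
        Matrix.toLin'_toMatrix', ← LinearMap.comp_assoc, hs (Q.tgt x), LinearMap.id_comp]
    have hh0 : homDim V M' ≠ 0 := by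
      intro h0
      rw [homDim, Submodule.finrank_eq_zero] at h0
      rw [h0, Submodule.mem_bot] at hπmem
      exact hπne hπmem
    have he := euler_eq V M'
    rw [hext] at he
    have hle := h2 M' hsub
    omega
  have hd : homDim V M = 0 := by
    rw [homDim, hbot]
    exact finrank_bot k _
  refine ⟨hd, ?_⟩
  have he := euler_eq V M
  rw [h1, hd] at he
  omega


end QRep

open QRep in
/-- King's numerical criterion implies perpendicularity to a rigid
representation. -/
theorem king_implies_perp (k : Type) [Field k] [IsAlgClosed k]
    (Q : FinQuiver) (hQ : Q.Acyclic) (V M : QRep k Q) (hV : extDim V V = 0)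
    (h1 : Q.euler V.dimVec M.dimVec = 0)
    (h2 : ∀ L : QRep k Q, IsSubrep L M → Q.euler V.dimVec L.dimVec ≤ 0) :
    homDim V M = 0 ∧ extDim V M = 0 := by
  exact QRep.king_aux V M hV h1 h2
end
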